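/- arXiv:2603.03560 — 4 statements merged into one kernel-verified Lean document; each statement's English description precedes it below -/
import Mathlib

section
/- The vector x* with components x*_n = (ω̂_n - b)/α_n - (2a/α_n)·(Σ_j (ω̂_j - b)/α_j)/(1 + 2a Σ_j 1/α_j) is the unique global maximizer over ℝ^N of the function u_R(x) = Σ_n (ω̂_n x_n - (α_n/2) x_n²) - a(Σ_n x_n)² - b(Σ_n x_n) - c. -/
open Finset

/-- The given allocation vector is the unique global maximizer of the aggregator's
quadratic social-welfare function. -/
theorem aggregator_best_response_unique_max
    (N : ℕ) (hN : 1 ≤ N)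
    (α : Fin N → ℝ) (hα : ∀ n, 0 < α n)
    (a b c : ℝ) (ha : 0 < a) (hb : 0 ≤ b) (hc : 0 ≤ c)
    (ωhat : Fin N → ℝ)
    (uR : (Fin N → ℝ) → ℝ)
    (huR : ∀ x, uR x =
      (∑ n, (ωhat n * x n - α n / 2 * (x n) ^ 2)) -
        (a * (∑ n, x n) ^ 2 + b * (∑ n, x n) + c))
    (xstar : Fin N → ℝ)
    (hxstar : ∀ n, xstar n =
      (ωhat n - b) / α n -
        (2 * a / α n) * ((∑ j, (ωhat j - b) / α j) / (1 + 2 * a * ∑ j, 1 / α j))) :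
    ∀ x : Fin N → ℝ, x ≠ xstar → uR x < uR xstar := by
  intro x hx
  have hα0 : ∀ n, α n ≠ 0 := fun n => (hα n).ne'
  set T : ℝ := ∑ j, 1 / α j with hT
  set S : ℝ := ∑ j, (ωhat j - b) / α j with hS
  have hne : (Finset.univ : Finset (Fin N)).Nonempty := by
    simp [Finset.univ_nonempty_iff, ← Fin.pos_iff_nonempty]; omega
  have hTpos : 0 < T := Finset.sum_pos (fun j _ => one_div_pos.mpr (hα j)) hne
  have hden : (0:ℝ) < 1 + 2 * a * T := by positivity
  set K : ℝ := S / (1 + 2 * a * T) with hK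
  have hfoc : ∀ n, α n * xstar n = ωhat n - b - 2 * a * K := by
    intro n
    rw [hxstar n, hK]
    field_simp [hα0 n]
  have hXstar : ∑ n, xstar n = K := by
    have h1 : ∑ n, xstar n = ∑ n, ((ωhat n - b) / α n - 2 * a * K * (1 / α n)) := by
      apply Finset.sum_congr rfl
      intro n _
      rw [hxstar n, hK]
      ring
    rw [h1, Finset.sum_sub_distrib, ← Finset.mul_sum, ← hS, ← hT, hK]
    field_simp
    ring
  have h1 : ∀ n, ωhat n * x n - α n / 2 * (x n) ^ 2
      = (ωhat n * xstar n - α n / 2 * (xstar n) ^ 2)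
        - α n / 2 * (x n - xstar n) ^ 2 + (b + 2 * a * K) * (x n - xstar n) := by
    intro n
    linear_combination (xstar n - x n) * hfoc n
  have hsum : ∑ n, (ωhat n * x n - α n / 2 * (x n) ^ 2)
      = ∑ n, (ωhat n * xstar n - α n / 2 * (xstar n) ^ 2)
        - (∑ n, α n / 2 * (x n - xstar n) ^ 2)
        + (b + 2 * a * K) * ((∑ n, x n) - (∑ n, xstar n)) := by
    rw [Finset.sum_congr rfl (fun n _ => h1 n)]
    rw [Finset.sum_add_distrib, Finset.sum_sub_distrib, ← Finset.mul_sum,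
      Finset.sum_sub_distrib]
    congr 1
    exact congrArg _ (Finset.sum_sub_distrib _ _)
  have hkey : uR x = uR xstar - (∑ n, α n / 2 * (x n - xstar n) ^ 2)
      - a * ((∑ n, x n) - (∑ n, xstar n)) ^ 2 := by
    rw [huR x, huR xstar, hsum, hXstar]
    ring
  obtain ⟨n0, hn0⟩ : ∃ n, x n ≠ xstar n := by
    by_contra h
    push_neg at h
    exact hx (funext h)
  have hd : x n0 - xstar n0 ≠ 0 := sub_ne_zero.mpr hn0
  have hpos : 0 < ∑ n, α n / 2 * (x n - xstar n) ^ 2 := by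
    have hsq : 0 < (x n0 - xstar n0) ^ 2 := by
      rcases hd.lt_or_gt with h | h
      · nlinarith
      · nlinarith
    apply Finset.sum_pos' (fun n _ => mul_nonneg (by linarith [hα n]) (sq_nonneg _))
    exact ⟨n0, Finset.mem_univ _, mul_pos (by linarith [hα n0]) hsq⟩
  have hD : 0 ≤ a * ((∑ n, x n) - (∑ n, xstar n)) ^ 2 := by positivity
  rw [hkey]
  linarith
end

section
/- The expected allocation E[x*_n] of consumer n in the N-consumer game, when the aggregator's beliefs about others equal their prior means E[ω_j], equals (ω̂_n - b_n^eff)/(α_n + 2a_n^eff), where a_n^eff = a/(1 + 2a Σ_{j≠n} 1/α_j) and b_n^eff = b + 2a(Σ_{j≠n}(E[ω_j] - b)/α_j)/(1 + 2a Σ_{j≠n} 1/α_j). That is, the N-consumer best response reduces to the best response of an effective two-player game with quadratic receiver utility ω_n x - (α_n/2 + a_n^eff)x² - b_n^eff x. -/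
open Finset

/-- The expected allocation of consumer `n`, when beliefs about the others equal their
prior means, coincides with the best response of the effective two-player game. -/
theorem effective_subgame_best_response
    (N : ℕ) (hN : 1 ≤ N)
    (α : Fin N → ℝ) (hα : ∀ n, 0 < α n)
    (a : ℝ) (ha : 0 < a) (b : ℝ)
    (n : Fin N)
    (ωhat : Fin N → ℝ)  -- beliefs, with `ωhat j = E[ω j]` for `j ≠ n`
    (aeff beff : ℝ)
    (haeff : aeff = a / (1 + 2 * a * ∑ j ∈ univ.erase n, 1 / α j))
    (hbeff : beff = b + 2 * a * (∑ j ∈ univ.erase n, (ωhat j - b) / α j) /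
        (1 + 2 * a * ∑ j ∈ univ.erase n, 1 / α j)) :
    (ωhat n - b) / α n -
        (2 * a / α n) * ((∑ j, (ωhat j - b) / α j) / (1 + 2 * a * ∑ j, 1 / α j)) =
      (ωhat n - beff) / (α n + 2 * aeff) := by
  set S : ℝ := ∑ j ∈ univ.erase n, 1 / α j with hS
  set T : ℝ := ∑ j ∈ univ.erase n, (ωhat j - b) / α j with hT
  have hSsum : (∑ j, 1 / α j) = S + 1 / α n := by
    rw [hS, ← Finset.sum_erase_add _ _ (Finset.mem_univ n)]
  have hTsum : (∑ j, (ωhat j - b) / α j) = T + (ωhat n - b) / α n := by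
    rw [hT, ← Finset.sum_erase_add _ _ (Finset.mem_univ n)]
  have hS0 : 0 ≤ S := Finset.sum_nonneg fun j _ => (div_pos one_pos (hα j)).le
  have hαn : (0:ℝ) < α n := hα n
  have h1 : (0:ℝ) < 1 + 2 * a * S := by positivity
  have h2 : (0:ℝ) < 1 + 2 * a * (S + 1 / α n) := by positivity
  have h3 : (0:ℝ) < α n + 2 * (a / (1 + 2 * a * S)) := by positivity
  rw [hSsum, hTsum, haeff, hbeff]
  field_simp
  ring
end

section
/- For every consumer n, the bias-minimizing price p_n* = (α_n b_n^eff + 2 a_n^eff E[ω_n])/(α_n + 2 a_n^eff), with a_n^eff = a/(1 + 2a Σ_{j≠n} 1/α_j) and b_n^eff = b + 2a(Σ_{j≠n}(E[ω_j]-b)/α_j)/(1 + 2a Σ_{j≠n} 1/α_j), is independent of n, and equals the uniform price p* = (b + 2a Σ_{j=1}^N E[ω_j]/α_j)/(1 + 2a Σ_{j=1}^N 1/α_j). -/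
open Finset

/-- The bias-minimizing price of every consumer subgame is the same, and equals the
uniform system-wide price `p*`. -/
theorem uniform_optimal_price
    (N : ℕ) (hN : 1 ≤ N)
    (α : Fin N → ℝ) (hα : ∀ n, 0 < α n)
    (a : ℝ) (ha : 0 < a) (b : ℝ)
    (Eω : Fin N → ℝ)
    (aeff beff pstar : Fin N → ℝ)
    (haeff : ∀ n, aeff n = a / (1 + 2 * a * ∑ j ∈ univ.erase n, 1 / α j))
    (hbeff : ∀ n, beff n = b + 2 * a * (∑ j ∈ univ.erase n, (Eω j - b) / α j) /
        (1 + 2 * a * ∑ j ∈ univ.erase n, 1 / α j))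
    (hpstar : ∀ n, pstar n = (α n * beff n + 2 * aeff n * Eω n) / (α n + 2 * aeff n)) :
    ∀ n, pstar n = (b + 2 * a * ∑ j, Eω j / α j) / (1 + 2 * a * ∑ j, 1 / α j) := by
  intro n
  set S : ℝ := ∑ j ∈ univ.erase n, 1 / α j with hS
  set T : ℝ := ∑ j ∈ univ.erase n, (Eω j - b) / α j with hT
  have hαn := hα n
  have hSnonneg : 0 ≤ S := Finset.sum_nonneg fun j _ => by have := hα j; positivity
  have hD : (0:ℝ) < 1 + 2 * a * S := by nlinarith
  have hsum1 : (∑ j, 1 / α j) = 1 / α n + S := (Finset.add_sum_erase _ _ (mem_univ n)).symm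
  have hsum2 : (∑ j, Eω j / α j) = Eω n / α n + ∑ j ∈ univ.erase n, Eω j / α j :=
    (Finset.add_sum_erase _ _ (mem_univ n)).symm
  have hTeq : T = (∑ j ∈ univ.erase n, Eω j / α j) - b * S := by
    rw [hT, hS, Finset.mul_sum, ← Finset.sum_sub_distrib]
    refine Finset.sum_congr rfl fun j _ => ?_
    have := (hα j).ne'
    field_simp
  have hden : α n + 2 * aeff n > 0 := by
    rw [haeff n, ← hS]
    positivity
  rw [hpstar n, haeff n, hbeff n, ← hS, ← hT, hsum1, hsum2, hTeq]
  have h1 : α n ≠ 0 := hαn.ne'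
  have h2 : (1 + 2 * a * S) ≠ 0 := hD.ne'
  have h3 : α n + 2 * (a / (1 + 2 * a * S)) ≠ 0 := by
    rw [haeff n, ← hS] at hden; exact hden.ne'
  have h4 : 1 + 2 * a * (1 / α n + S) ≠ 0 := by
    have : 0 < 1 + 2 * a * (1 / α n + S) := by
      have : 0 < 1 / α n := by positivity
      nlinarith
    exact this.ne'
  field_simp
  ring
end

section
/- Let γ ∈ (0,1), δ ∈ ℝ, and let θ be a random variable supported on [θ̲, θ̄] with θ̲ < θ̄ and mean E[θ]. Define D(μ) = ½(E[γθ+δ | θ ≤ μ] + E[γθ+δ | θ > μ]) - μ. If (2-γ)θ̲ - γE[θ] < 2δ < (2-γ)θ̄ - γE[θ], then lim_{μ→θ̲⁺} D(μ) > 0 and lim_{μ→θ̄⁻} D(μ) < 0, where the limits equal ½(g(θ̲) + E[g(θ)]) - θ̲ and ½(g(θ̄) + E[g(θ)]) - θ̄ respectively with g(θ) = γθ + δ; hence by continuity D has a root μ₁ ∈ (θ̲, θ̄), i.e., a two-interval informative equilibrium boundary exists. -/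
open MeasureTheory ProbabilityTheory Filter Set

lemma key_integral {Ωs : Type*} [MeasureSpace Ωs]
    (θ : Ωs → ℝ) (hθ : Measurable θ) (lo hi : ℝ) (f : ℝ → ℝ)
    (hf_cont : ContinuousOn f (Icc lo hi))
    (hf_nn : ∀ t ∈ Icc lo hi, 0 ≤ f t)
    (hlaw : Measure.map θ ℙ =
      (volume.restrict (Icc lo hi)).withDensity (fun t => ENNReal.ofReal (f t)))
    (s : Set ℝ) (hs : MeasurableSet s) (g : ℝ → ℝ) (hgc : Continuous g) :
    ∫ ω in θ ⁻¹' s, g (θ ω) ∂ℙ = ∫ t in s ∩ Icc lo hi, g t * f t := by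
  have hIcc : MeasurableSet (Icc lo hi) := measurableSet_Icc
  have hfae : AEMeasurable f (volume.restrict (Icc lo hi)) := hf_cont.aemeasurable hIcc
  have h1 : ∫ ω in θ ⁻¹' s, g (θ ω) ∂ℙ = ∫ t in s, g t ∂(Measure.map θ ℙ) :=
    (setIntegral_map hs (hgc.aestronglyMeasurable) hθ.aemeasurable).symm
  rw [h1, hlaw]
  have h2 : (((volume.restrict (Icc lo hi)).withDensity
      (fun t => ENNReal.ofReal (f t))).restrict s)
      = (volume.restrict (s ∩ Icc lo hi)).withDensity (fun t => ENNReal.ofReal (f t)) := by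
    rw [restrict_withDensity hs, Measure.restrict_restrict hs]
  have hrepr : (∫ t in s, g t ∂((volume.restrict (Icc lo hi)).withDensity
      (fun t => ENNReal.ofReal (f t)))) = ∫ t, g t ∂((volume.restrict (s ∩ Icc lo hi)).withDensity (fun t => ENNReal.ofReal (f t))) := by
    rw [← h2]
  rw [hrepr]
  have hfae2 : AEMeasurable (fun t => (f t).toNNReal) (volume.restrict (s ∩ Icc lo hi)) := by
    have hle : volume.restrict (s ∩ Icc lo hi) ≤ volume.restrict (Icc lo hi) :=
      Measure.restrict_mono inter_subset_right le_rfl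
    exact (hfae.mono_measure hle).real_toNNReal
  have h3 : ((volume.restrict (s ∩ Icc lo hi)).withDensity (fun t => ENNReal.ofReal (f t)))
      = ((volume.restrict (s ∩ Icc lo hi)).withDensity (fun t => ((f t).toNNReal : ENNReal))) := by
    congr 1
  rw [h3, integral_withDensity_eq_integral_smul₀ hfae2 g]
  refine setIntegral_congr_fun (hs.inter hIcc) (fun t ht => ?_)
  have : ((f t).toNNReal : ℝ) = f t := Real.coe_toNNReal _ (hf_nn t ht.2)
  simp [NNReal.smul_def, this, mul_comm]

/-- Existence of a two-interval informative equilibrium: under the stated price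
condition, the indifference gap `D` is positive near `θ̲`, negative near `θ̄`
(with the stated boundary limits), and hence has a root in `(θ̲, θ̄)`. -/
theorem two_interval_equilibrium_exists
    {Ωs : Type*} [MeasureSpace Ωs] [IsProbabilityMeasure (ℙ : Measure Ωs)]
    (γ δ lo hi : ℝ) (hγ0 : 0 < γ) (hγ1 : γ < 1) (hlohi : lo < hi)
    (θ : Ωs → ℝ) (hθmeas : Measurable θ)
    -- the law of θ has a continuous, strictly positive density `f` on `[lo, hi]`
    (f : ℝ → ℝ)
    (hf_cont : ContinuousOn f (Icc lo hi))
    (hf_pos : ∀ t ∈ Icc lo hi, 0 < f t)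
    (hlaw : Measure.map θ ℙ =
      (volume.restrict (Icc lo hi)).withDensity (fun t => ENNReal.ofReal (f t)))
    (Eθ : ℝ) (hEθ : Eθ = ∫ ω, θ ω ∂ℙ)
    (D : ℝ → ℝ)
    (hD : ∀ μ, D μ =
      (1 / 2) *
        ((∫ ω in {w : Ωs | θ w ≤ μ}, (γ * θ ω + δ) ∂ℙ) /
            (ℙ {w : Ωs | θ w ≤ μ}).toReal +
         (∫ ω in {w : Ωs | μ < θ w}, (γ * θ ω + δ) ∂ℙ) /
            (ℙ {w : Ωs | μ < θ w}).toReal) - μ)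
    (hlow : (2 - γ) * lo - γ * Eθ < 2 * δ)
    (hhigh : 2 * δ < (2 - γ) * hi - γ * Eθ) :
    Tendsto D (nhdsWithin lo (Ioi lo))
        (nhds ((1 / 2) * ((γ * lo + δ) + (γ * Eθ + δ)) - lo)) ∧
    0 < (1 / 2) * ((γ * lo + δ) + (γ * Eθ + δ)) - lo ∧
    Tendsto D (nhdsWithin hi (Iio hi))
        (nhds ((1 / 2) * ((γ * hi + δ) + (γ * Eθ + δ)) - hi)) ∧
    (1 / 2) * ((γ * hi + δ) + (γ * Eθ + δ)) - hi < 0 ∧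
    ∃ μ₁ ∈ Ioo lo hi, D μ₁ = 0 := by
  have hIcc : MeasurableSet (Icc lo hi) := measurableSet_Icc
  have hf_nn : ∀ t ∈ Icc lo hi, 0 ≤ f t := fun t ht => (hf_pos t ht).le
  have hgc : Continuous (fun t : ℝ => γ * t + δ) := by fun_prop
  have hkey : ∀ (s : Set ℝ), MeasurableSet s → ∀ (G : ℝ → ℝ), Continuous G →
      ∫ ω in θ ⁻¹' s, G (θ ω) ∂ℙ = ∫ t in s ∩ Icc lo hi, G t * f t :=
    fun s hs G hGc => key_integral θ hθmeas lo hi f hf_cont hf_nn hlaw s hs G hGc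
  -- mass identity
  have hmass : ∀ (s : Set ℝ), MeasurableSet s →
      (ℙ (θ ⁻¹' s)).toReal = ∫ t in s ∩ Icc lo hi, f t := by
    intro s hs
    have h1 := hkey s hs (fun _ => (1:ℝ)) continuous_const
    rw [setIntegral_const] at h1
    simpa [measureReal_def] using h1
  -- total mass
  have htot : ∫ t in Icc lo hi, f t = 1 := by
    have := (hmass univ MeasurableSet.univ).symm
    simpa [preimage_univ, measure_univ, univ_inter] using this
  -- mean
  have hEθ' : Eθ = ∫ t in Icc lo hi, t * f t := by
    have := hkey univ MeasurableSet.univ (fun t => t) continuous_id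
    rw [hEθ]
    simpa [preimage_univ, univ_inter, Measure.restrict_univ] using this
  -- integrabilities
  have hf_int : IntegrableOn f (Icc lo hi) volume := hf_cont.integrableOn_Icc
  have hgf_cont : ContinuousOn (fun t => (γ * t + δ) * f t) (Icc lo hi) :=
    (hgc.continuousOn).mul hf_cont
  have hgf_int : IntegrableOn (fun t => (γ * t + δ) * f t) (Icc lo hi) volume :=
    hgf_cont.integrableOn_Icc
  have htf_int : IntegrableOn (fun t => t * f t) (Icc lo hi) volume :=
    ((continuous_id.continuousOn).mul hf_cont).integrableOn_Icc
  -- primitive-type functions on the real line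
  set Fm : ℝ → ℝ := fun μ => ∫ t in Ioc lo μ, f t with hFm
  set Am : ℝ → ℝ := fun μ => ∫ t in Ioc lo μ, (γ * t + δ) * f t with hAm
  set Gm : ℝ → ℝ := fun μ => ∫ t in Ioc μ hi, f t with hGm
  set Bm : ℝ → ℝ := fun μ => ∫ t in Ioc μ hi, (γ * t + δ) * f t with hBm
  set Tg : ℝ := ∫ t in Icc lo hi, (γ * t + δ) * f t with hTgdef
  -- set identities
  have hsetF : ∀ μ, μ ≤ hi → Iic μ ∩ Icc lo hi = Icc lo μ := by
    intro μ hμ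
    ext t
    constructor
    · rintro ⟨h1, h2, _⟩; exact ⟨h2, h1⟩
    · rintro ⟨h1, h2⟩; exact ⟨h2, h1, h2.trans hμ⟩
  have hsetG : ∀ μ, lo ≤ μ → Ioi μ ∩ Icc lo hi = Ioc μ hi := by
    intro μ hμ
    ext t
    constructor
    · rintro ⟨h1, _, h3⟩; exact ⟨h1, h3⟩
    · rintro ⟨h1, h2⟩; exact ⟨h1, hμ.trans h1.le, h2⟩
  -- mass of the two conditioning events
  have hmF : ∀ μ ∈ Icc lo hi, (ℙ {w : Ωs | θ w ≤ μ}).toReal = Fm μ := by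
    intro μ hμ
    have := hmass (Iic μ) measurableSet_Iic
    rw [hsetF μ hμ.2, integral_Icc_eq_integral_Ioc] at this
    exact this
  have hmG : ∀ μ ∈ Icc lo hi, (ℙ {w : Ωs | μ < θ w}).toReal = Gm μ := by
    intro μ hμ
    have := hmass (Ioi μ) measurableSet_Ioi
    rw [hsetG μ hμ.1] at this
    exact this
  -- conditional numerators
  have hiF : ∀ μ ∈ Icc lo hi,
      (∫ ω in {w : Ωs | θ w ≤ μ}, (γ * θ ω + δ) ∂ℙ) = Am μ := by
    intro μ hμ
    have := hkey (Iic μ) measurableSet_Iic (fun t => γ * t + δ) hgc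
    rw [hsetF μ hμ.2, integral_Icc_eq_integral_Ioc] at this
    exact this
  have hiG : ∀ μ ∈ Icc lo hi,
      (∫ ω in {w : Ωs | μ < θ w}, (γ * θ ω + δ) ∂ℙ) = Bm μ := by
    intro μ hμ
    have := hkey (Ioi μ) measurableSet_Ioi (fun t => γ * t + δ) hgc
    rw [hsetG μ hμ.1] at this
    exact this
  -- the formula for D on [lo,hi]
  have hDform : ∀ μ ∈ Icc lo hi,
      D μ = (1 / 2) * (Am μ / Fm μ + Bm μ / Gm μ) - μ := by
    intro μ hμ
    rw [hD μ, hmF μ hμ, hmG μ hμ, hiF μ hμ, hiG μ hμ]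
  -- splitting identities
  have hdisj : ∀ μ : ℝ, Disjoint (Ioc lo μ) (Ioc μ hi) := by
    intro μ
    exact Set.disjoint_left.mpr (fun x hx hx' => absurd hx'.1 (not_lt.mpr hx.2))
  have hsubF : ∀ μ, μ ≤ hi → Ioc lo μ ⊆ Icc lo hi :=
    fun μ hμ t ht => ⟨ht.1.le, ht.2.trans hμ⟩
  have hsubG : ∀ μ, lo ≤ μ → Ioc μ hi ⊆ Icc lo hi :=
    fun μ hμ t ht => ⟨hμ.trans ht.1.le, ht.2⟩
  have hsplit : ∀ (h : ℝ → ℝ), IntegrableOn h (Icc lo hi) volume →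
      ∀ μ ∈ Icc lo hi,
      (∫ t in Ioc lo μ, h t) + (∫ t in Ioc μ hi, h t) = ∫ t in Icc lo hi, h t := by
    intro h hint μ hμ
    rw [← setIntegral_union (hdisj μ) measurableSet_Ioc
      (hint.mono_set (hsubF μ hμ.2)) (hint.mono_set (hsubG μ hμ.1)),
      Ioc_union_Ioc_eq_Ioc hμ.1 hμ.2, ← integral_Icc_eq_integral_Ioc]
  have hFG : ∀ μ ∈ Icc lo hi, Fm μ + Gm μ = 1 := by
    intro μ hμ
    rw [hFm, hGm]
    simpa [htot] using hsplit f hf_int μ hμ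
  have hAB : ∀ μ ∈ Icc lo hi, Am μ + Bm μ = Tg := hsplit _ hgf_int
  -- value of the full expectation
  have hTg : Tg = γ * Eθ + δ := by
    rw [hTgdef]
    have h1 : ∀ t ∈ Icc lo hi, (γ * t + δ) * f t = γ * (t * f t) + δ * f t := by
      intro t _; ring
    rw [setIntegral_congr_fun hIcc h1, integral_add (htf_int.const_mul γ)
      (hf_int.const_mul δ), integral_const_mul, integral_const_mul, htot, hEθ']
    ring
  -- strict positivity of the masses
  have hFpos : ∀ μ, lo < μ → μ ≤ hi → 0 < Fm μ := by
    intro μ h1 h2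
    have hsub : Icc lo μ ⊆ Icc lo hi := Icc_subset_Icc le_rfl h2
    obtain ⟨c, hc, hmin⟩ := isCompact_Icc.exists_isMinOn (nonempty_Icc.mpr h1.le)
      (hf_cont.mono hsub)
    have hcpos : 0 < f c := hf_pos c (hsub hc)
    have hge : f c * (volume (Ioc lo μ)).toReal ≤ Fm μ := by
      refine setIntegral_ge_of_const_le_real measurableSet_Ioc
        (by simp [Real.volume_Ioc]) (fun x hx => hmin ⟨hx.1.le, hx.2⟩)
        (hf_int.mono_set (hsubF μ h2))
    have hvol : (volume (Ioc lo μ)).toReal = μ - lo := by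
      rw [Real.volume_Ioc, ENNReal.toReal_ofReal (by linarith)]
    rw [hvol] at hge
    exact lt_of_lt_of_le (mul_pos hcpos (by linarith)) hge
  have hGpos : ∀ μ, lo ≤ μ → μ < hi → 0 < Gm μ := by
    intro μ h1 h2
    have hsub : Icc μ hi ⊆ Icc lo hi := Icc_subset_Icc h1 le_rfl
    obtain ⟨c, hc, hmin⟩ := isCompact_Icc.exists_isMinOn (nonempty_Icc.mpr h2.le)
      (hf_cont.mono hsub)
    have hcpos : 0 < f c := hf_pos c (hsub hc)
    have hge : f c * (volume (Ioc μ hi)).toReal ≤ Gm μ := by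
      refine setIntegral_ge_of_const_le_real measurableSet_Ioc
        (by simp [Real.volume_Ioc]) (fun x hx => hmin ⟨hx.1.le, hx.2⟩)
        (hf_int.mono_set (hsubG μ h1))
    have hvol : (volume (Ioc μ hi)).toReal = hi - μ := by
      rw [Real.volume_Ioc, ENNReal.toReal_ofReal (by linarith)]
    rw [hvol] at hge
    exact lt_of_lt_of_le (mul_pos hcpos (by linarith)) hge
  -- continuity of the primitives
  have hFmC : ContinuousOn Fm (Icc lo hi) := intervalIntegral.continuousOn_primitive hf_int
  have hAmC : ContinuousOn Am (Icc lo hi) := intervalIntegral.continuousOn_primitive hgf_int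
  -- endpoint values
  have hFlo : Fm lo = 0 := by simp [hFm]
  have hAlo : Am lo = 0 := by simp [hAm]
  have hFhi : Fm hi = 1 := by
    rw [hFm]; simp only [← integral_Icc_eq_integral_Ioc]; exact htot
  have hAhi : Am hi = Tg := by
    rw [hAm, hTgdef]; simp only [← integral_Icc_eq_integral_Ioc]
  have hGhi : Gm hi = 0 := by simp [hGm]
  have hBhi : Bm hi = 0 := by simp [hBm]
  -- filter bookkeeping
  have hloIcc : lo ∈ Icc lo hi := left_mem_Icc.mpr hlohi.le
  have hhiIcc : hi ∈ Icc lo hi := right_mem_Icc.mpr hlohi.le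
  have hmono_lo : (nhdsWithin lo (Ioi lo) : Filter ℝ) ≤ nhdsWithin lo (Icc lo hi) := by
    rw [← nhdsWithin_Ioo_eq_nhdsGT hlohi]
    exact nhdsWithin_mono lo Ioo_subset_Icc_self
  have hmono_hi : (nhdsWithin hi (Iio hi) : Filter ℝ) ≤ nhdsWithin hi (Icc lo hi) := by
    rw [← nhdsWithin_Ioo_eq_nhdsLT hlohi]
    exact nhdsWithin_mono hi Ioo_subset_Icc_self
  have hevIoo_lo : ∀ᶠ μ in nhdsWithin lo (Ioi lo), μ ∈ Ioo lo hi :=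
    Filter.eventually_of_mem (Ioo_mem_nhdsGT_of_mem ⟨le_rfl, hlohi⟩) (fun x hx => hx)
  have hevIoo_hi : ∀ᶠ μ in nhdsWithin hi (Iio hi), μ ∈ Ioo lo hi :=
    Filter.eventually_of_mem (Ioo_mem_nhdsLT_of_mem ⟨hlohi, le_rfl⟩) (fun x hx => hx)
  -- limits of the primitives at the endpoints
  have hAmlo : Tendsto Am (nhdsWithin lo (Ioi lo)) (nhds 0) := by
    have := (hAmC lo hloIcc).mono_left hmono_lo
    rwa [hAlo] at this
  have hFmlo : Tendsto Fm (nhdsWithin lo (Ioi lo)) (nhds 0) := by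
    have := (hFmC lo hloIcc).mono_left hmono_lo
    rwa [hFlo] at this
  have hAmhi : Tendsto Am (nhdsWithin hi (Iio hi)) (nhds Tg) := by
    have := (hAmC hi hhiIcc).mono_left hmono_hi
    rwa [hAhi] at this
  have hFmhi : Tendsto Fm (nhdsWithin hi (Iio hi)) (nhds 1) := by
    have := (hFmC hi hhiIcc).mono_left hmono_hi
    rwa [hFhi] at this
  -- limit of the upper conditional expectation near lo
  have T2lo : Tendsto (fun μ => Bm μ / Gm μ) (nhdsWithin lo (Ioi lo)) (nhds Tg) := by
    have base : Tendsto (fun μ => (Tg - Am μ) / (1 - Fm μ)) (nhdsWithin lo (Ioi lo))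
        (nhds ((Tg - 0) / (1 - 0))) :=
      Tendsto.div (tendsto_const_nhds.sub hAmlo) (tendsto_const_nhds.sub hFmlo) (by norm_num)
    rw [sub_zero, sub_zero, div_one] at base
    refine base.congr' ?_
    filter_upwards [hevIoo_lo] with μ hμ
    have h1 := hAB μ (Ioo_subset_Icc_self hμ)
    have h2 := hFG μ (Ioo_subset_Icc_self hμ)
    rw [show Tg - Am μ = Bm μ by linarith, show (1:ℝ) - Fm μ = Gm μ by linarith]
  -- limit of the lower conditional expectation near hi
  have T1hi : Tendsto (fun μ => Am μ / Fm μ) (nhdsWithin hi (Iio hi)) (nhds Tg) := by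
    have base : Tendsto (fun μ => Am μ / Fm μ) (nhdsWithin hi (Iio hi))
        (nhds (Tg / 1)) := Tendsto.div hAmhi hFmhi one_ne_zero
    rwa [div_one] at base
  -- squeeze for the lower conditional expectation near lo
  have hbdlo : ∀ μ ∈ Ioo lo hi,
      (γ * lo + δ) ≤ Am μ / Fm μ ∧ Am μ / Fm μ ≤ γ * μ + δ := by
    intro μ hμ
    have hFp := hFpos μ hμ.1 hμ.2.le
    have hintf := hf_int.mono_set (hsubF μ hμ.2.le)
    have hintgf := hgf_int.mono_set (hsubF μ hμ.2.le)
    constructor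
    · rw [le_div_iff₀ hFp]
      calc (γ * lo + δ) * Fm μ = ∫ t in Ioc lo μ, (γ * lo + δ) * f t :=
            (integral_const_mul _ _).symm
        _ ≤ ∫ t in Ioc lo μ, (γ * t + δ) * f t :=
            setIntegral_mono_on (hintf.const_mul _) hintgf measurableSet_Ioc
              (fun t ht => mul_le_mul_of_nonneg_right (by nlinarith [ht.1.le])
                (hf_nn t (hsubF μ hμ.2.le ht)))
    · rw [div_le_iff₀ hFp]
      calc Am μ ≤ ∫ t in Ioc lo μ, (γ * μ + δ) * f t :=
            setIntegral_mono_on hintgf (hintf.const_mul _) measurableSet_Ioc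
              (fun t ht => mul_le_mul_of_nonneg_right (by nlinarith [ht.2])
                (hf_nn t (hsubF μ hμ.2.le ht)))
        _ = (γ * μ + δ) * Fm μ := integral_const_mul _ _
  have T1lo : Tendsto (fun μ => Am μ / Fm μ) (nhdsWithin lo (Ioi lo)) (nhds (γ * lo + δ)) := by
    refine tendsto_of_tendsto_of_tendsto_of_le_of_le' tendsto_const_nhds
      ((hgc.tendsto lo).mono_left nhdsWithin_le_nhds) ?_ ?_
    · filter_upwards [hevIoo_lo] with μ hμ using (hbdlo μ hμ).1
    · filter_upwards [hevIoo_lo] with μ hμ using (hbdlo μ hμ).2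
  -- squeeze for the upper conditional expectation near hi
  have hbdhi : ∀ μ ∈ Ioo lo hi,
      (γ * μ + δ) ≤ Bm μ / Gm μ ∧ Bm μ / Gm μ ≤ γ * hi + δ := by
    intro μ hμ
    have hGp := hGpos μ hμ.1.le hμ.2
    have hintf := hf_int.mono_set (hsubG μ hμ.1.le)
    have hintgf := hgf_int.mono_set (hsubG μ hμ.1.le)
    constructor
    · rw [le_div_iff₀ hGp]
      calc (γ * μ + δ) * Gm μ = ∫ t in Ioc μ hi, (γ * μ + δ) * f t :=
            (integral_const_mul _ _).symm
        _ ≤ ∫ t in Ioc μ hi, (γ * t + δ) * f t :=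
            setIntegral_mono_on (hintf.const_mul _) hintgf measurableSet_Ioc
              (fun t ht => mul_le_mul_of_nonneg_right (by nlinarith [ht.1.le])
                (hf_nn t (hsubG μ hμ.1.le ht)))
    · rw [div_le_iff₀ hGp]
      calc Bm μ ≤ ∫ t in Ioc μ hi, (γ * hi + δ) * f t :=
            setIntegral_mono_on hintgf (hintf.const_mul _) measurableSet_Ioc
              (fun t ht => mul_le_mul_of_nonneg_right (by nlinarith [ht.2])
                (hf_nn t (hsubG μ hμ.1.le ht)))
        _ = (γ * hi + δ) * Gm μ := integral_const_mul _ _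
  have T2hi : Tendsto (fun μ => Bm μ / Gm μ) (nhdsWithin hi (Iio hi)) (nhds (γ * hi + δ)) := by
    refine tendsto_of_tendsto_of_tendsto_of_le_of_le'
      ((hgc.tendsto hi).mono_left nhdsWithin_le_nhds) tendsto_const_nhds ?_ ?_
    · filter_upwards [hevIoo_hi] with μ hμ using (hbdhi μ hμ).1
    · filter_upwards [hevIoo_hi] with μ hμ using (hbdhi μ hμ).2
  -- the two boundary limits of D
  have TDlo : Tendsto D (nhdsWithin lo (Ioi lo))
      (nhds ((1 / 2) * ((γ * lo + δ) + (γ * Eθ + δ)) - lo)) := by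
    have base : Tendsto (fun μ => (1 / 2) * (Am μ / Fm μ + Bm μ / Gm μ) - μ)
        (nhdsWithin lo (Ioi lo)) (nhds ((1 / 2) * ((γ * lo + δ) + Tg) - lo)) :=
      ((T1lo.add T2lo).const_mul (1 / 2)).sub
        ((continuous_id.tendsto lo).mono_left nhdsWithin_le_nhds)
    rw [hTg] at base
    refine base.congr' ?_
    filter_upwards [hevIoo_lo] with μ hμ using (hDform μ (Ioo_subset_Icc_self hμ)).symm
  have TDhi : Tendsto D (nhdsWithin hi (Iio hi))
      (nhds ((1 / 2) * ((γ * hi + δ) + (γ * Eθ + δ)) - hi)) := by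
    have base : Tendsto (fun μ => (1 / 2) * (Am μ / Fm μ + Bm μ / Gm μ) - μ)
        (nhdsWithin hi (Iio hi)) (nhds ((1 / 2) * (Tg + (γ * hi + δ)) - hi)) :=
      ((T1hi.add T2hi).const_mul (1 / 2)).sub
        ((continuous_id.tendsto hi).mono_left nhdsWithin_le_nhds)
    rw [hTg] at base
    have : (1 / 2 : ℝ) * ((γ * Eθ + δ) + (γ * hi + δ)) - hi
        = (1 / 2) * ((γ * hi + δ) + (γ * Eθ + δ)) - hi := by ring
    rw [this] at base
    refine base.congr' ?_
    filter_upwards [hevIoo_hi] with μ hμ using (hDform μ (Ioo_subset_Icc_self hμ)).symm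
  -- the two sign conditions
  have s1 : 0 < (1 / 2) * ((γ * lo + δ) + (γ * Eθ + δ)) - lo := by linarith
  have s2 : (1 / 2) * ((γ * hi + δ) + (γ * Eθ + δ)) - hi < 0 := by linarith
  refine ⟨TDlo, s1, TDhi, s2, ?_⟩
  -- existence of a root via the intermediate value theorem
  obtain ⟨a, haD, haIoo⟩ := ((TDlo.eventually (eventually_gt_nhds s1)).and hevIoo_lo).exists
  have hevab : ∀ᶠ μ in nhdsWithin hi (Iio hi), μ ∈ Ioo a hi :=
    Filter.eventually_of_mem (Ioo_mem_nhdsLT_of_mem ⟨haIoo.2, le_rfl⟩) (fun x hx => hx)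
  obtain ⟨b, hbD, hbab⟩ := ((TDhi.eventually (eventually_lt_nhds s2)).and hevab).exists
  have hab : a < b := hbab.1
  have hsubIoo : Icc a b ⊆ Ioo lo hi :=
    fun x hx => ⟨lt_of_lt_of_le haIoo.1 hx.1, lt_of_le_of_lt hx.2 hbab.2⟩
  have hsub2 : Icc a b ⊆ Icc lo hi := fun x hx => Ioo_subset_Icc_self (hsubIoo hx)
  have hDform2 : ∀ μ ∈ Ioo lo hi,
      D μ = (1 / 2) * (Am μ / Fm μ + (Tg - Am μ) / (1 - Fm μ)) - μ := by
    intro μ hμ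
    have h1 := hAB μ (Ioo_subset_Icc_self hμ)
    have h2 := hFG μ (Ioo_subset_Icc_self hμ)
    rw [hDform μ (Ioo_subset_Icc_self hμ), show Bm μ = Tg - Am μ by linarith,
      show Gm μ = 1 - Fm μ by linarith]
  have hDC : ContinuousOn D (Icc a b) := by
    have hE : ContinuousOn
        (fun μ => (1 / 2) * (Am μ / Fm μ + (Tg - Am μ) / (1 - Fm μ)) - μ) (Icc a b) := by
      apply ContinuousOn.sub _ continuousOn_id
      apply ContinuousOn.mul continuousOn_const
      apply ContinuousOn.add
      · exact (hAmC.mono hsub2).div (hFmC.mono hsub2)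
          (fun μ hμ => (hFpos μ (hsubIoo hμ).1 (hsubIoo hμ).2.le).ne')
      · refine (continuousOn_const.sub (hAmC.mono hsub2)).div
          (continuousOn_const.sub (hFmC.mono hsub2)) (fun μ hμ => ?_)
        have h2 := hFG μ (hsub2 hμ)
        have h3 := hGpos μ (hsubIoo hμ).1.le (hsubIoo hμ).2
        have : (0:ℝ) < 1 - Fm μ := by linarith
        exact this.ne'
    exact hE.congr (fun μ hμ => hDform2 μ (hsubIoo hμ))
  have hmem : (0 : ℝ) ∈ Icc (D b) (D a) := ⟨hbD.le, haD.le⟩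
  obtain ⟨μ₁, hμ₁, hroot⟩ := intermediate_value_Icc' hab.le hDC hmem
  exact ⟨μ₁, hsubIoo hμ₁, hroot⟩
end
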